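/- Let C ⊆ F_2^n be a linear code, f = (2^n/|C|)·1_C, and T ⊆ [n]. Then E‖E(f|T)‖_q^q = 2^{(q-1)(|T| - r_C(T))} for every q ≥ 1, where r_C(T) is the rank of the columns of a generating matrix of C indexed by T. -/

import Mathlib

open Finset

/-- Rank of the column submatrix of `G` indexed by `T`. -/
noncomputable def colRank {n k : ℕ} (G : Fin k → Fin n → ZMod 2) (T : Finset (Fin n)) : ℕ :=
  Module.finrank (ZMod 2)
    (Submodule.span (ZMod 2) ((fun j => fun i => G i j) '' (T : Set (Fin n))))

open Classical in
/-- The scaled indicator function `f = (2^n/|C|)·1_C`. -/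
noncomputable def codeFn (n : ℕ) (C : Submodule (ZMod 2) (Fin n → ZMod 2))
    (x : Fin n → ZMod 2) : ℝ :=
  if x ∈ C then (2 : ℝ) ^ n / (Nat.card C) else 0

/-- Conditional expectation of `f` given the coordinates in `T`. -/
noncomputable def condExpZ (n : ℕ) (f : (Fin n → ZMod 2) → ℝ) (T : Finset (Fin n))
    (x : Fin n → ZMod 2) : ℝ :=
  (∑ y : Fin n → ZMod 2, if ∀ i ∈ T, y i = x i then f y else 0) / 2 ^ (n - T.card)

lemma card_submodule {V : Type*} [AddCommGroup V] [Module (ZMod 2) V] [Finite V]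
    (S : Submodule (ZMod 2) V) : Nat.card S = 2 ^ Module.finrank (ZMod 2) S := by
  have : Fintype S := Fintype.ofFinite _
  rw [Nat.card_eq_fintype_card, Module.card_eq_pow_finrank (K := ZMod 2), ZMod.card]

lemma finrank_split {V W : Type*} [AddCommGroup V] [Module (ZMod 2) V] [Finite V]
    [AddCommGroup W] [Module (ZMod 2) W]
    (p : Submodule (ZMod 2) V) (π : V →ₗ[ZMod 2] W) :
    Module.finrank (ZMod 2) p =
      Module.finrank (ZMod 2) (p.map π) +
        Module.finrank (ZMod 2) (p ⊓ LinearMap.ker π : Submodule (ZMod 2) V) := by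
  have : Module.Finite (ZMod 2) V := Module.Finite.of_finite
  let φ := π.comp p.subtype
  have h1 : LinearMap.range φ = p.map π := by
    rw [LinearMap.range_comp, Submodule.range_subtype]
  have h2 : Submodule.map p.subtype (LinearMap.ker φ) = p ⊓ LinearMap.ker π := by
    rw [LinearMap.ker_comp, Submodule.map_comap_subtype]
  have h3 := LinearMap.finrank_range_add_finrank_ker φ
  have h5 : Module.finrank (ZMod 2) (LinearMap.ker φ)
      = Module.finrank (ZMod 2) (p ⊓ LinearMap.ker π : Submodule (ZMod 2) V) := by
    rw [← h2]
    exact (Submodule.equivMapOfInjective p.subtype (Submodule.injective_subtype p) _).finrank_eq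
  rw [h1, h5] at h3
  omega

set_option maxHeartbeats 2000000 in
theorem condExp_code_norm (n k : ℕ) (G : Fin k → Fin n → ZMod 2)
    (C : Submodule (ZMod 2) (Fin n → ZMod 2))
    (hC : C = Submodule.span (ZMod 2) (Set.range G)) (T : Finset (Fin n))
    (q : ℝ) (hq : 1 ≤ q) :
    (∑ x : Fin n → ZMod 2, condExpZ n (codeFn n C) T x ^ q) / 2 ^ n =
      2 ^ ((q - 1) * ((T.card : ℝ) - colRank G T)) := by
  classical
  set π : (Fin n → ZMod 2) →ₗ[ZMod 2] ({i // i ∈ T} → ZMod 2) :=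
    LinearMap.funLeft (ZMod 2) (ZMod 2) (Subtype.val) with hπ
  have hπsurj : Function.Surjective π :=
    LinearMap.funLeft_surjective_of_injective _ _ _ Subtype.val_injective
  set D := C.map π with hD
  set r := colRank G T with hr
  clear_value r
  set t := T.card with htdef
  clear_value t
  have htn : t ≤ n := by
    rw [htdef]; simpa using T.card_le_univ
  -- dimension facts
  have hV : Module.finrank (ZMod 2) (Fin n → ZMod 2) = n := by simp
  have hW : Module.finrank (ZMod 2) ({i // i ∈ T} → ZMod 2) = t := by
    simp [htdef]
  have hDrank : Module.finrank (ZMod 2) D = r := by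
    let M : Matrix (Fin k) {i // i ∈ T} (ZMod 2) := fun i j => G i j.1
    have hDspan : D = Submodule.span (ZMod 2) (Set.range M) := by
      rw [hD, hC, Submodule.map_span, ← Set.range_comp]
      rfl
    have h1 : Module.finrank (ZMod 2) D = M.rank := by
      rw [hDspan, Matrix.rank_eq_finrank_span_row]; rfl
    have hsets : ((fun j => fun i => G i j) '' (T : Set (Fin n)))
        = Set.range M.transpose := by
      rw [Set.image_eq_range]
      rfl
    have h2 : r = M.transpose.rank := by
      rw [hr, colRank, hsets, Matrix.rank_eq_finrank_span_row]; rfl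
    rw [h1, h2, Matrix.rank_transpose]
  have hkerrank : Module.finrank (ZMod 2) (LinearMap.ker π) = n - t := by
    have h := LinearMap.finrank_range_add_finrank_ker π
    rw [LinearMap.range_eq_top.mpr hπsurj] at h
    rw [finrank_top, hW, hV] at h
    omega
  -- condition rewrite
  have hcond : ∀ x y : Fin n → ZMod 2, ((∀ i ∈ T, y i = x i) ↔ π y = π x) := by
    intro x y
    rw [funext_iff]
    simp [hπ, LinearMap.funLeft_apply, Subtype.forall]
  set κ := Nat.card (C ⊓ LinearMap.ker π : Submodule (ZMod 2) (Fin n → ZMod 2)) with hκ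
  clear_value κ
  set v : ℝ := (2 : ℝ) ^ n / (Nat.card C) * κ / 2 ^ (n - t) with hv
  clear_value v
  have hpoint : ∀ x : Fin n → ZMod 2,
      condExpZ n (codeFn n C) T x = if π x ∈ D then v else 0 := by
    intro x
    unfold condExpZ codeFn
    have hsummand : ∀ y : Fin n → ZMod 2,
        (if ∀ i ∈ T, y i = x i then (if y ∈ C then (2:ℝ) ^ n / (Nat.card C) else 0) else 0)
          = if y ∈ C ∧ π y = π x then (2:ℝ) ^ n / (Nat.card C) else 0 := by
      intro y
      by_cases h1 : π y = π x <;> by_cases h2 : y ∈ C <;>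
        simp [hcond x y, h1, h2]
    rw [Finset.sum_congr rfl fun y _ => hsummand y, ← Finset.sum_filter,
      Finset.sum_const, nsmul_eq_mul]
    by_cases hx : π x ∈ D
    · rw [if_pos hx]
      obtain ⟨y0, hy0C, hy0⟩ := hx
      have hcard : (univ.filter (fun y => y ∈ C ∧ π y = π x)).card
          = (univ.filter (fun y => y ∈ C ∧ π y = 0)).card := by
        apply Finset.card_bij' (fun y _ => y - y0) (fun y _ => y + y0)
        · intro a ha
          simp only [mem_filter, mem_univ, true_and] at ha ⊢
          exact ⟨C.sub_mem ha.1 hy0C, by rw [map_sub, ha.2, hy0, sub_self]⟩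
        · intro a ha
          simp only [mem_filter, mem_univ, true_and] at ha ⊢
          exact ⟨C.add_mem ha.1 hy0C, by rw [map_add, ha.2, hy0, zero_add]⟩
        · intro a _; abel
        · intro a _; abel
      have hcard2 : (univ.filter (fun y => y ∈ C ∧ π y = 0)).card = κ := by
        rw [hκ, Nat.card_eq_fintype_card, Fintype.card_subtype]
        congr 1
        ext y
        simp [Submodule.mem_inf, LinearMap.mem_ker]
      rw [hcard, hcard2, hv, htdef]
      ring
    · rw [if_neg hx]
      have : (univ.filter (fun y => y ∈ C ∧ π y = π x)) = ∅ := by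
        ext y
        simp only [mem_filter, mem_univ, true_and, Finset.notMem_empty, iff_false]
        rintro ⟨hyC, hyx⟩
        exact hx ⟨y, hyC, hyx⟩
      rw [this]
      simp
  -- cardinalities
  have hCcard : (Nat.card C : ℝ) = 2 ^ r * κ := by
    have h := finrank_split C π
    rw [← hD, hDrank] at h
    rw [card_submodule C, hκ, card_submodule, h]
    push_cast [pow_add]
    ring
  have hκpos : 0 < (κ : ℝ) := by
    rw [hκ]
    exact_mod_cast Nat.card_pos
  -- count of x with π x ∈ D
  have hN : (univ.filter (fun x => π x ∈ D)).card = 2 ^ r * 2 ^ (n - t) := by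
    have hset : (univ.filter (fun x => π x ∈ D)).card = Nat.card (D.comap π) := by
      rw [Nat.card_eq_fintype_card, Fintype.card_subtype]
      congr 1
    have h := finrank_split (D.comap π) π
    have hmap : (D.comap π).map π = D :=
      Submodule.map_comap_eq_self (by rw [LinearMap.range_eq_top.mpr hπsurj]; exact le_top)
    have hinf : (D.comap π) ⊓ LinearMap.ker π = LinearMap.ker π := by
      rw [inf_eq_right]
      intro x hx
      simp only [LinearMap.mem_ker] at hx
      simp [Submodule.mem_comap, hx, D.zero_mem]
    rw [hmap, hinf, hDrank, hkerrank] at h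
    rw [hset, card_submodule, h, pow_add]
  -- total sum
  have hq0 : q ≠ 0 := by linarith
  have hsum : (∑ x : Fin n → ZMod 2, condExpZ n (codeFn n C) T x ^ q)
      = ((univ.filter (fun x => π x ∈ D)).card : ℝ) * v ^ q := by
    rw [Finset.sum_congr rfl fun x _ => by
      rw [hpoint x, apply_ite (· ^ q), Real.zero_rpow hq0]]
    rw [← Finset.sum_filter, Finset.sum_const, nsmul_eq_mul]
  -- value of v
  have hvval : v = (2 : ℝ) ^ ((t : ℝ) - r) := by
    have h2n : (2:ℝ) ^ n = 2 ^ t * 2 ^ (n - t) := by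
      rw [← pow_add]; congr 1; omega
    have hκ' : (κ : ℝ) ≠ 0 := ne_of_gt hκpos
    have h1 : (2:ℝ) ^ (n - t) ≠ 0 := by positivity
    have h2 : (2:ℝ) ^ r ≠ 0 := by positivity
    have key : ∀ a b c : ℝ, b ≠ 0 → c ≠ 0 → a * b / (2 ^ r * c) * c / b = a / 2 ^ r := by
      intro a b c hb hc
      field_simp
    rw [hv, hCcard, Real.rpow_sub two_pos, Real.rpow_natCast, Real.rpow_natCast, h2n]
    exact key _ _ _ h1 hκ'
  rw [hsum, hN, hvval]
  push_cast
  rw [← Real.rpow_natCast 2 r, ← Real.rpow_natCast 2 (n - t), ← Real.rpow_natCast 2 n,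
    ← Real.rpow_mul two_pos.le, ← Real.rpow_add two_pos, ← Real.rpow_add two_pos,
    ← Real.rpow_sub two_pos]
  congr 1
  rw [Nat.cast_sub htn]
  ring
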